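/- Fix ϑ ∈ (1/2,1), c ≠ 0, ζ > 0. For Δ > 0 define K(Δ) = inf{ i ∈ ℕ : |c ∫_{(i-1)Δ}^{iΔ} s^{-ϑ} ds| < ζ √Δ }. Then there exist constants 0 < c₁ ≤ c₂ < ∞ and Δ₀ > 0 such that for all 0 < Δ < Δ₀, c₁ Δ^{(1/2-ϑ)/ϑ} ≤ K(Δ) ≤ c₂ Δ^{(1/2-ϑ)/ϑ}. -/

import Mathlib

open Real

/-- Concavity lower bound: `β (b-a) b^(β-1) ≤ b^β - a^β` for `0 ≤ a ≤ b`, `0 < β ≤ 1`. -/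
lemma bern_low {a b β : ℝ} (ha : 0 ≤ a) (hab : a ≤ b) (hb : 0 < b)
    (hβ0 : 0 < β) (hβ1 : β ≤ 1) : β * (b - a) * b ^ (β - 1) ≤ b ^ β - a ^ β := by
  have hs : (-1:ℝ) ≤ a / b - 1 := by
    have : 0 ≤ a / b := div_nonneg ha hb.le
    linarith
  have h := rpow_one_add_le_one_add_mul_self hs hβ0.le hβ1
  have h2 : (a / b) ^ β ≤ 1 + β * (a / b - 1) := by
    have e : 1 + (a / b - 1) = a / b := by ring
    rwa [e] at h
  have hbβ : 0 < b ^ β := Real.rpow_pos_of_pos hb β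
  have h3 : a ^ β ≤ (1 + β * (a / b - 1)) * b ^ β := by
    have h4 := mul_le_mul_of_nonneg_right h2 hbβ.le
    rwa [Real.div_rpow ha hb.le, div_mul_cancel₀ _ hbβ.ne'] at h4
  have hb1 : b ^ (β - 1) = b ^ β / b := by
    rw [Real.rpow_sub hb, Real.rpow_one]
  rw [hb1]
  have expand : (1 + β * (a / b - 1)) * b ^ β = b ^ β - β * (b - a) * (b ^ β / b) := by
    field_simp
    ring
  rw [expand] at h3
  linarith

/-- Concavity upper bound: `b^β - a^β ≤ β (b-a) a^(β-1)` for `0 < a ≤ b`, `0 < β ≤ 1`. -/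
lemma bern_up {a b β : ℝ} (ha : 0 < a) (hab : a ≤ b)
    (hβ0 : 0 < β) (hβ1 : β ≤ 1) : b ^ β - a ^ β ≤ β * (b - a) * a ^ (β - 1) := by
  have hs : (-1:ℝ) ≤ b / a - 1 := by
    have : 0 ≤ b / a := div_nonneg (ha.le.trans hab) ha.le
    linarith
  have h := rpow_one_add_le_one_add_mul_self hs hβ0.le hβ1
  have h2 : (b / a) ^ β ≤ 1 + β * (b / a - 1) := by
    have e : 1 + (b / a - 1) = b / a := by ring
    rwa [e] at h
  have haβ : 0 < a ^ β := Real.rpow_pos_of_pos ha β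
  have h3 : b ^ β ≤ (1 + β * (b / a - 1)) * a ^ β := by
    have h4 := mul_le_mul_of_nonneg_right h2 haβ.le
    rwa [Real.div_rpow (ha.le.trans hab) ha.le, div_mul_cancel₀ _ haβ.ne'] at h4
  have ha1 : a ^ (β - 1) = a ^ β / a := by
    rw [Real.rpow_sub ha, Real.rpow_one]
  rw [ha1]
  have expand : (1 + β * (b / a - 1)) * a ^ β = a ^ β + β * (b - a) * (a ^ β / a) := by
    field_simp
  rw [expand] at h3
  linarith

/-- If `Δ ≤ T ^ p⁻¹` with `p < 0` then `T ≤ Δ ^ p`. -/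
lemma rpow_aux_ge {T p Δ : ℝ} (hT : 0 < T) (hΔ : 0 < Δ) (hp : p < 0)
    (h : Δ ≤ T ^ p⁻¹) : T ≤ Δ ^ p := by
  have h1 : (T ^ p⁻¹ : ℝ) ^ p ≤ Δ ^ p := Real.rpow_le_rpow_of_nonpos hΔ h hp.le
  rwa [← Real.rpow_mul hT.le, inv_mul_cancel₀ hp.ne, Real.rpow_one] at h1

set_option maxHeartbeats 1600000 in
/-- The number of truncated increments after a drift burst is of exact order
`Δ^{(1/2-ϑ)/ϑ}`. -/
theorem truncation_count_order
    (ϑ c ζ : ℝ) (hϑ : ϑ ∈ Set.Ioo (1/2 : ℝ) 1) (hc : c ≠ 0) (hζ : 0 < ζ)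
    (K : ℝ → ℕ)
    (hK : ∀ Δ : ℝ, K Δ = sInf {i : ℕ |
      |c * ∫ s in (((i : ℝ) - 1) * Δ)..((i : ℝ) * Δ), s ^ (-ϑ)| < ζ * Real.sqrt Δ}) :
    ∃ c₁ c₂ Δ₀ : ℝ, 0 < c₁ ∧ c₁ ≤ c₂ ∧ 0 < Δ₀ ∧
      ∀ Δ : ℝ, 0 < Δ → Δ < Δ₀ →
        c₁ * Δ ^ ((1/2 - ϑ)/ϑ) ≤ (K Δ : ℝ) ∧ (K Δ : ℝ) ≤ c₂ * Δ ^ ((1/2 - ϑ)/ϑ) := by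
  obtain ⟨hθh, hθ1⟩ := hϑ
  have hθ0 : (0:ℝ) < ϑ := by linarith
  set β : ℝ := 1 - ϑ with hβ
  have hβ0 : 0 < β := by rw [hβ]; linarith
  have hβh : β < 1/2 := by rw [hβ]; linarith
  have hβ1 : β ≤ 1 := by rw [hβ]; linarith
  have hβθ : β - 1 = -ϑ := by rw [hβ]; ring
  have hcabs : (0:ℝ) < |c| := abs_pos.mpr hc
  set C₀ : ℝ := (|c| / ζ) ^ (ϑ⁻¹ : ℝ) with hC₀def
  have hC₀ : 0 < C₀ := Real.rpow_pos_of_pos (div_pos hcabs hζ) _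
  have hcos : 0 < Real.cos (β * π) := by
    apply Real.cos_pos_of_mem_Ioo
    constructor
    · nlinarith [Real.pi_pos]
    · nlinarith [Real.pi_pos]
  set D : ℝ := |c| * Real.cos (β * π) / β with hDdef
  have hD : 0 < D := div_pos (mul_pos hcabs hcos) hβ0
  set ex : ℝ := (1/2 - ϑ)/ϑ with hex
  have hexneg : ex < 0 := div_neg_of_neg_of_pos (by linarith) hθ0
  set Δa : ℝ := (ζ / D) ^ ((β - 1/2)⁻¹ : ℝ) with hΔadef
  have hΔa0 : 0 < Δa := Real.rpow_pos_of_pos (div_pos hζ hD) _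
  set Δb : ℝ := (C₀⁻¹) ^ (ex⁻¹ : ℝ) with hΔbdef
  have hΔb0 : 0 < Δb := Real.rpow_pos_of_pos (inv_pos.mpr hC₀) _
  refine ⟨C₀, 3 * C₀, min Δa Δb, hC₀, by linarith, lt_min hΔa0 hΔb0, ?_⟩
  intro Δ hΔ hΔlt
  have hΔa : Δ ≤ Δa := (lt_min_iff.mp hΔlt).1.le
  have hΔb : Δ ≤ Δb := (lt_min_iff.mp hΔlt).2.le
  set M : ℝ := C₀ * Δ ^ ex with hMdef
  have hM0 : 0 < M := mul_pos hC₀ (Real.rpow_pos_of_pos hΔ _)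
  -- M ≥ 1
  have hM1 : 1 ≤ M := by
    have h1 : C₀⁻¹ ≤ Δ ^ ex := rpow_aux_ge (inv_pos.mpr hC₀) hΔ hexneg hΔb
    calc (1:ℝ) = C₀ * C₀⁻¹ := by rw [mul_inv_cancel₀ hC₀.ne']
    _ ≤ C₀ * Δ ^ ex := by
        exact mul_le_mul_of_nonneg_left h1 hC₀.le
  -- the key identity
  have hMϑ : M ^ (-ϑ) = ζ / |c| * Δ ^ (ϑ - 1/2) := by
    have h1 : M ^ (-ϑ) = C₀ ^ (-ϑ) * (Δ ^ ex) ^ (-ϑ) :=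
      Real.mul_rpow hC₀.le (Real.rpow_nonneg hΔ.le ex)
    have h2 : C₀ ^ (-ϑ) = ζ / |c| := by
      rw [hC₀def, ← Real.rpow_mul (div_pos hcabs hζ).le,
        show (ϑ⁻¹ : ℝ) * -ϑ = -1 by field_simp, Real.rpow_neg_one, inv_div]
    have h3 : (Δ ^ ex) ^ (-ϑ) = Δ ^ (ϑ - 1/2) := by
      rw [← Real.rpow_mul hΔ.le]
      congr 1
      rw [hex]
      field_simp
      ring
    rw [h1, h2, h3]
  have hkey : |c| * Δ ^ β * M ^ (-ϑ) = ζ * Δ ^ ((1:ℝ)/2) := by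
    rw [hMϑ, show |c| * Δ ^ β * (ζ / |c| * Δ ^ (ϑ - 1/2)) =
      ζ * (Δ ^ β * Δ ^ (ϑ - 1/2)) * (|c| / |c|) by ring, div_self hcabs.ne', mul_one,
      ← Real.rpow_add hΔ, show β + (ϑ - 1/2) = 1/2 by rw [hβ]; ring]
  have hsq : Real.sqrt Δ = Δ ^ ((1:ℝ)/2) := Real.sqrt_eq_rpow Δ
  -- integral formula
  have hIeq : ∀ i : ℕ, (∫ s in (((i:ℝ)-1)*Δ)..((i:ℝ)*Δ), s ^ (-ϑ)) =
      (((i:ℝ)*Δ) ^ β - (((i:ℝ)-1)*Δ) ^ β) / β := by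
    intro i
    rw [integral_rpow (Or.inl (by linarith : (-1:ℝ) < -ϑ)),
      show -ϑ + 1 = β by rw [hβ]; ring]
  have hΔΔ : Δ * Δ ^ (-ϑ) = Δ ^ β := by
    rw [show (β:ℝ) = 1 + -ϑ by rw [hβ]; ring,
      Real.rpow_one_add' hΔ.le (by rw [show (1:ℝ) + -ϑ = β by rw [hβ]; ring]; exact hβ0.ne')]
  -- lower bound on the integral for i ≥ 1
  have hlow : ∀ i : ℕ, 1 ≤ i →
      Δ ^ β * (i:ℝ) ^ (-ϑ) ≤ ∫ s in (((i:ℝ)-1)*Δ)..((i:ℝ)*Δ), s ^ (-ϑ) := by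
    intro i hi
    have hi1 : (1:ℝ) ≤ (i:ℝ) := by exact_mod_cast hi
    have ha : 0 ≤ ((i:ℝ)-1)*Δ := mul_nonneg (by linarith) hΔ.le
    have hb : 0 < (i:ℝ)*Δ := mul_pos (by linarith) hΔ
    have hab : ((i:ℝ)-1)*Δ ≤ (i:ℝ)*Δ := by nlinarith
    have h := bern_low ha hab hb hβ0 hβ1
    rw [hIeq i, le_div_iff₀ hβ0]
    calc Δ ^ β * (i:ℝ) ^ (-ϑ) * β
        = β * ((i:ℝ)*Δ - ((i:ℝ)-1)*Δ) * ((i:ℝ) ^ (-ϑ) * Δ ^ (-ϑ)) := by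
          rw [← hΔΔ]; ring
      _ = β * ((i:ℝ)*Δ - ((i:ℝ)-1)*Δ) * (((i:ℝ)*Δ) ^ (β-1)) := by
          rw [Real.mul_rpow (by linarith : (0:ℝ) ≤ (i:ℝ)) hΔ.le, hβθ]
      _ ≤ ((i:ℝ)*Δ) ^ β - (((i:ℝ)-1)*Δ) ^ β := h
  have hInn : ∀ i : ℕ, 1 ≤ i →
      0 ≤ ∫ s in (((i:ℝ)-1)*Δ)..((i:ℝ)*Δ), s ^ (-ϑ) := by
    intro i hi
    refine le_trans ?_ (hlow i hi)
    have hi1 : (0:ℝ) < (i:ℝ) := by exact_mod_cast hi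
    positivity
  -- upper bound on the integral for i ≥ 2
  have hup : ∀ i : ℕ, 2 ≤ i →
      (∫ s in (((i:ℝ)-1)*Δ)..((i:ℝ)*Δ), s ^ (-ϑ)) ≤ Δ ^ β * ((i:ℝ)-1) ^ (-ϑ) := by
    intro i hi
    have hi1 : (2:ℝ) ≤ (i:ℝ) := by exact_mod_cast hi
    have ha : 0 < ((i:ℝ)-1)*Δ := mul_pos (by linarith) hΔ
    have hab : ((i:ℝ)-1)*Δ ≤ (i:ℝ)*Δ := by nlinarith
    have h := bern_up ha hab hβ0 hβ1
    rw [hIeq i, div_le_iff₀ hβ0]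
    calc ((i:ℝ)*Δ) ^ β - (((i:ℝ)-1)*Δ) ^ β
        ≤ β * ((i:ℝ)*Δ - ((i:ℝ)-1)*Δ) * ((((i:ℝ)-1)*Δ) ^ (β-1)) := h
      _ = β * ((i:ℝ)*Δ - ((i:ℝ)-1)*Δ) * (((i:ℝ)-1) ^ (-ϑ) * Δ ^ (-ϑ)) := by
          rw [Real.mul_rpow (by linarith : (0:ℝ) ≤ (i:ℝ)-1) hΔ.le, hβθ]
      _ = Δ ^ β * ((i:ℝ)-1) ^ (-ϑ) * β := by rw [← hΔΔ]; ring
  -- every element of the defining set exceeds M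
  have hC : ∀ i : ℕ,
      |c * ∫ s in (((i:ℝ)-1)*Δ)..((i:ℝ)*Δ), s ^ (-ϑ)| < ζ * Real.sqrt Δ → M < (i:ℝ) := by
    intro i hi
    rcases Nat.eq_zero_or_pos i with h0 | h1
    · -- i = 0 is impossible
      exfalso
      subst h0
      have e1 : (((0:ℕ):ℝ) - 1) * Δ = -Δ := by norm_num
      have e2 : ((0:ℕ):ℝ) * Δ = 0 := by norm_num
      rw [hIeq 0, e1, e2] at hi
      have hneg : (-Δ:ℝ) ^ β = Δ ^ β * Real.cos (β * π) := by
        rw [Real.rpow_def_of_neg (by linarith : (-Δ:ℝ) < 0), Real.log_neg_eq_log,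
          Real.rpow_def_of_pos hΔ]
      rw [Real.zero_rpow hβ0.ne', hneg] at hi
      have habs : |c * ((0 - Δ ^ β * Real.cos (β * π)) / β)| =
          |c| * (Δ ^ β * Real.cos (β * π)) / β := by
        rw [abs_mul, abs_div, abs_of_pos hβ0, zero_sub, abs_neg,
          abs_of_nonneg (mul_nonneg (Real.rpow_nonneg hΔ.le β) hcos.le), mul_div_assoc]
        ring
      rw [habs, hsq] at hi
      -- but ζ * Δ^(1/2) ≤ D * Δ^β
      have h5 : ζ / D ≤ Δ ^ (β - 1/2) :=
        rpow_aux_ge (div_pos hζ hD) hΔ (by linarith) hΔa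
      have h6 : ζ ≤ D * Δ ^ (β - 1/2) := by
        rw [div_le_iff₀ hD] at h5
        linarith [h5]
      have h7 : ζ * Δ ^ ((1:ℝ)/2) ≤ D * Δ ^ (β - 1/2) * Δ ^ ((1:ℝ)/2) :=
        mul_le_mul_of_nonneg_right h6 (Real.rpow_nonneg hΔ.le _)
      have h8 : D * Δ ^ (β - 1/2) * Δ ^ ((1:ℝ)/2) = |c| * (Δ ^ β * Real.cos (β * π)) / β := by
        rw [mul_assoc, ← Real.rpow_add hΔ, show β - 1/2 + (1:ℝ)/2 = β by ring, hDdef]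
        field_simp
      rw [h8] at h7
      linarith
    · -- i ≥ 1
      have hIl := hlow i h1
      have hIn := hInn i h1
      have habs : |c * ∫ s in (((i:ℝ)-1)*Δ)..((i:ℝ)*Δ), s ^ (-ϑ)| =
          |c| * ∫ s in (((i:ℝ)-1)*Δ)..((i:ℝ)*Δ), s ^ (-ϑ) := by
        rw [abs_mul, abs_of_nonneg hIn]
      rw [habs, hsq] at hi
      have h9 : |c| * Δ ^ β * ((i:ℝ) ^ (-ϑ)) < |c| * Δ ^ β * M ^ (-ϑ) := by
        rw [hkey]
        calc |c| * Δ ^ β * ((i:ℝ) ^ (-ϑ)) = |c| * (Δ ^ β * (i:ℝ) ^ (-ϑ)) := by ring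
          _ ≤ |c| * ∫ s in (((i:ℝ)-1)*Δ)..((i:ℝ)*Δ), s ^ (-ϑ) :=
              mul_le_mul_of_nonneg_left hIl hcabs.le
          _ < ζ * Δ ^ ((1:ℝ)/2) := hi
      have hpos : 0 < |c| * Δ ^ β := mul_pos hcabs (Real.rpow_pos_of_pos hΔ _)
      have h10 : (i:ℝ) ^ (-ϑ) < M ^ (-ϑ) := (mul_lt_mul_iff_right₀ hpos).mp h9
      by_contra hcon
      push_neg at hcon
      have hi0 : (0:ℝ) < (i:ℝ) := by exact_mod_cast h1
      exact absurd (Real.rpow_le_rpow_of_nonpos hi0 hcon (by linarith : -ϑ ≤ 0))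
        (not_le.mpr h10)
  -- the witness N = ⌊M⌋ + 2 belongs to the set
  set N : ℕ := ⌊M⌋₊ + 2 with hNdef
  have hNM : M < (N:ℝ) - 1 := by
    have := Nat.lt_floor_add_one M
    push_cast [hNdef]
    push_cast at this
    linarith
  have hN2 : 2 ≤ N := by omega
  have hNmem : |c * ∫ s in (((N:ℝ)-1)*Δ)..((N:ℝ)*Δ), s ^ (-ϑ)| < ζ * Real.sqrt Δ := by
    have hIu := hup N hN2
    have hIn := hInn N (by omega)
    rw [abs_mul, abs_of_nonneg hIn, hsq, ← hkey]
    have h11 : ((N:ℝ)-1) ^ (-ϑ) < M ^ (-ϑ) :=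
      Real.rpow_lt_rpow_of_neg hM0 hNM (by linarith)
    calc |c| * ∫ s in (((N:ℝ)-1)*Δ)..((N:ℝ)*Δ), s ^ (-ϑ)
        ≤ |c| * (Δ ^ β * ((N:ℝ)-1) ^ (-ϑ)) := mul_le_mul_of_nonneg_left hIu hcabs.le
      _ < |c| * (Δ ^ β * M ^ (-ϑ)) := by
          have hpos : 0 < |c| * Δ ^ β := mul_pos hcabs (Real.rpow_pos_of_pos hΔ _)
          calc |c| * (Δ ^ β * ((N:ℝ)-1) ^ (-ϑ)) = |c| * Δ ^ β * ((N:ℝ)-1) ^ (-ϑ) := by ring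
            _ < |c| * Δ ^ β * M ^ (-ϑ) := (mul_lt_mul_iff_right₀ hpos).mpr h11
            _ = |c| * (Δ ^ β * M ^ (-ϑ)) := by ring
      _ = |c| * Δ ^ β * M ^ (-ϑ) := by ring
  -- conclude
  rw [hK Δ]
  set S : Set ℕ := {i : ℕ |
    |c * ∫ s in (((i : ℝ) - 1) * Δ)..((i : ℝ) * Δ), s ^ (-ϑ)| < ζ * Real.sqrt Δ} with hSdef
  have hNS : N ∈ S := hNmem
  have hSne : S.Nonempty := ⟨N, hNS⟩
  constructor
  · have hmem := Nat.sInf_mem hSne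
    have := hC (sInf S) hmem
    rw [hMdef] at this
    linarith
  · have hle : sInf S ≤ N := Nat.sInf_le hNS
    have hle' : ((sInf S : ℕ):ℝ) ≤ (N:ℝ) := by exact_mod_cast hle
    have hfl : ((⌊M⌋₊ : ℕ):ℝ) ≤ M := Nat.floor_le hM0.le
    have hNle : (N:ℝ) ≤ M + 2 := by
      push_cast [hNdef]
      push_cast at hfl
      linarith
    have : (N:ℝ) ≤ 3 * M := by linarith
    calc ((sInf S : ℕ):ℝ) ≤ (N:ℝ) := hle'
      _ ≤ 3 * M := this
      _ = 3 * C₀ * Δ ^ ((1/2 - ϑ)/ϑ) := by rw [hMdef]; ring
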